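/- Let n ≥ 2, κ > 1, P ∈ ℝⁿ with P ≠ 0, and |P| < b < κ|P|. Then: (a) min over x ∈ Γ(P,b) of h(x,P,b) equals (κ|P| − b)/(κ − 1), attained at x = P/|P|; (b) max over x ∈ Γ(P,b) of h(x,P,b) equals √(κ²|P|² − b²)/√(κ² − 1), and this maximum is ≤ √(2|P|)·√((κ|P| − b)/(κ − 1)). -/

import Mathlib

set_option maxHeartbeats 1000000

open scoped RealInnerProductSpace
open Module


private lemma oval_aux_min (κ b N t : ℝ) (hκ : 1 < κ) (hN : 0 < N) (hb1 : N < b)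
    (hb2 : b < κ * N)
    (ht0 : b + Real.sqrt ((κ^2-1)*(κ^2*N^2-b^2)) ≤ κ^2*t) (htN : t ≤ N) :
    (κ*N - b)/(κ-1) ≤
      ((κ^2*t - b) - Real.sqrt ((κ^2*t-b)^2 - (κ^2-1)*(κ^2*N^2-b^2)))/(κ^2-1) := by
  have hκ2 : (0:ℝ) < κ^2 - 1 := by nlinarith
  have hb0 : (0:ℝ) < b := hN.trans hb1
  have hCin : (0:ℝ) < κ^2*N^2 - b^2 := by
    nlinarith [mul_pos (sub_pos.2 hb2) (show (0:ℝ) < κ*N + b by nlinarith)]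
  set C : ℝ := (κ^2-1)*(κ^2*N^2-b^2) with hCdef
  have hCpos : 0 < C := by rw [hCdef]; exact mul_pos hκ2 hCin
  set sC : ℝ := Real.sqrt C with hsCdef
  have hsC : sC^2 = C := Real.sq_sqrt hCpos.le
  have hsC0 : 0 ≤ sC := Real.sqrt_nonneg _
  set u : ℝ := κ^2*t - b with hudef
  have hu : sC ≤ u := by rw [hudef]; linarith
  set A : ℝ := (κ+1)*(κ*N-b) with hAdef
  have hA : 0 < A := by rw [hAdef]; nlinarith
  have hA2 : A^2 < C := by
    rw [hAdef, hCdef]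
    nlinarith [mul_pos (mul_pos (show (0:ℝ) < κ+1 by linarith) (sub_pos.2 hb2))
      (mul_pos (show (0:ℝ) < 2*κ by linarith) (sub_pos.2 hb1))]
  have hAsC : A < sC := by nlinarith
  have huN : u ≤ κ^2*N - b := by rw [hudef]; nlinarith
  have hkey : 2*A*(κ^2*N-b) = A^2 + C := by rw [hAdef, hCdef]; ring
  have hΔ : u^2 - C ≤ (u - A)^2 := by
    nlinarith [hkey, mul_nonneg hA.le (sub_nonneg.2 huN)]
  have hsqrt : Real.sqrt (u^2 - C) ≤ u - A := by
    have h1 : Real.sqrt (u^2 - C) ≤ Real.sqrt ((u-A)^2) := Real.sqrt_le_sqrt hΔ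
    rwa [Real.sqrt_sq (by linarith : (0:ℝ) ≤ u - A)] at h1
  have hrw : (κ*N - b)/(κ-1) = A/(κ^2-1) := by
    rw [hAdef, div_eq_div_iff (by linarith) (by positivity)]; ring
  rw [hrw]
  gcongr
  linarith

private lemma oval_aux_max (κ b N t : ℝ) (hκ : 1 < κ) (hN : 0 < N) (hb1 : N < b)
    (hb2 : b < κ * N)
    (ht0 : b + Real.sqrt ((κ^2-1)*(κ^2*N^2-b^2)) ≤ κ^2*t) :
    ((κ^2*t - b) - Real.sqrt ((κ^2*t-b)^2 - (κ^2-1)*(κ^2*N^2-b^2)))/(κ^2-1) ≤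
      Real.sqrt ((κ^2-1)*(κ^2*N^2-b^2)) / (κ^2-1) := by
  have hκ2 : (0:ℝ) < κ^2 - 1 := by nlinarith
  have hb0 : (0:ℝ) < b := hN.trans hb1
  have hCin : (0:ℝ) < κ^2*N^2 - b^2 := by
    nlinarith [mul_pos (sub_pos.2 hb2) (show (0:ℝ) < κ*N + b by nlinarith)]
  set C : ℝ := (κ^2-1)*(κ^2*N^2-b^2) with hCdef
  have hCpos : 0 < C := by rw [hCdef]; exact mul_pos hκ2 hCin
  set sC : ℝ := Real.sqrt C with hsCdef
  have hsC : sC^2 = C := Real.sq_sqrt hCpos.le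
  have hsC0 : 0 ≤ sC := Real.sqrt_nonneg _
  set u : ℝ := κ^2*t - b with hudef
  have hu : sC ≤ u := by rw [hudef]; linarith
  have hΔ : (u - sC)^2 ≤ u^2 - C := by
    nlinarith [mul_le_mul_of_nonneg_right hu hsC0]
  have hsqrt : u - sC ≤ Real.sqrt (u^2 - C) := by
    have h1 : Real.sqrt ((u-sC)^2) ≤ Real.sqrt (u^2 - C) := Real.sqrt_le_sqrt hΔ
    rwa [Real.sqrt_sq (by linarith : (0:ℝ) ≤ u - sC)] at h1
  gcongr
  linarith


/-- The discriminant `Δ(t) = (κ²t − b)² − (κ² − 1)(κ²|P|² − b²)` for the Cartesian oval in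
the case `κ > 1`. -/
noncomputable def ovalDelta' (κ b normP t : ℝ) : ℝ :=
  (κ ^ 2 * t - b) ^ 2 - (κ ^ 2 - 1) * (κ ^ 2 * normP ^ 2 - b ^ 2)

/-- The polar radius `h(x,P,b) = ρ₋(x)` of the refracting piece of the Cartesian oval
(case `κ > 1`). -/
noncomputable def ovalH' {n : ℕ} (κ b : ℝ) (P x : EuclideanSpace ℝ (Fin n)) : ℝ :=
  ((κ ^ 2 * ⟪x, P⟫ - b) - Real.sqrt (ovalDelta' κ b ‖P‖ ⟪x, P⟫)) / (κ ^ 2 - 1)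

/-- `I(P,b) = (b + √((κ² − 1)(κ²|P|² − b²)))/(κ²|P|)`. -/
noncomputable def ovalI (κ b normP : ℝ) : ℝ :=
  (b + Real.sqrt ((κ ^ 2 - 1) * (κ ^ 2 * normP ^ 2 - b ^ 2))) / (κ ^ 2 * normP)

/-- `Γ(P,b) = {x ∈ S^{n−1} : x·P ≥ I(P,b)|P|}`, the set of directions of the refracting
piece of the oval. -/
def ovalGamma {n : ℕ} (κ b : ℝ) (P : EuclideanSpace ℝ (Fin n)) :
    Set (EuclideanSpace ℝ (Fin n)) :=
  {x | ‖x‖ = 1 ∧ ovalI κ b ‖P‖ * ‖P‖ ≤ ⟪x, P⟫}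

/-- Lemma 4.3 (a), (b): extrema of `h(·,P,b)` over `Γ(P,b)` for `κ > 1`. -/
theorem stmt12 {n : ℕ} (hn : 2 ≤ n) (κ : ℝ) (hκ : 1 < κ)
    (P : EuclideanSpace ℝ (Fin n)) (hP : P ≠ 0) (b : ℝ)
    (hb1 : ‖P‖ < b) (hb2 : b < κ * ‖P‖) :
    -- (a) the minimum, attained at x = P/|P|
    IsLeast {r : ℝ | ∃ x ∈ ovalGamma κ b P, ovalH' κ b P x = r}
      ((κ * ‖P‖ - b) / (κ - 1)) ∧
    ovalH' κ b P (‖P‖⁻¹ • P) = (κ * ‖P‖ - b) / (κ - 1) ∧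
    -- (b) the maximum, together with the bound √(2|P|)·√((κ|P| − b)/(κ − 1))
    IsGreatest {r : ℝ | ∃ x ∈ ovalGamma κ b P, ovalH' κ b P x = r}
      (Real.sqrt (κ ^ 2 * ‖P‖ ^ 2 - b ^ 2) / Real.sqrt (κ ^ 2 - 1)) ∧
    Real.sqrt (κ ^ 2 * ‖P‖ ^ 2 - b ^ 2) / Real.sqrt (κ ^ 2 - 1) ≤
      Real.sqrt (2 * ‖P‖) * Real.sqrt ((κ * ‖P‖ - b) / (κ - 1)) := by
  have hN : 0 < ‖P‖ := norm_pos_iff.mpr hP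
  have hκ0 : (0:ℝ) < κ := by linarith
  have hκ2 : (0:ℝ) < κ^2 - 1 := by nlinarith
  have hb0 : (0:ℝ) < b := hN.trans hb1
  have hCin : (0:ℝ) < κ^2*‖P‖^2 - b^2 := by
    nlinarith [mul_pos (sub_pos.2 hb2) (show (0:ℝ) < κ*‖P‖ + b by nlinarith)]
  set sC : ℝ := Real.sqrt ((κ^2-1)*(κ^2*‖P‖^2-b^2)) with hsCdef
  have hsC0 : 0 ≤ sC := Real.sqrt_nonneg _
  have hsC : sC^2 = (κ^2-1)*(κ^2*‖P‖^2-b^2) :=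
    Real.sq_sqrt (by positivity)
  -- I * ‖P‖ = (b + sC)/κ²
  have hIN : ovalI κ b ‖P‖ * ‖P‖ = (b + sC)/κ^2 := by
    unfold ovalI
    rw [← hsCdef]
    field_simp
  -- sC ≤ κ²‖P‖ − b
  have hsCle : sC ≤ κ^2*‖P‖ - b := by
    have h1 : (κ^2-1)*(κ^2*‖P‖^2-b^2) ≤ (κ^2*‖P‖-b)^2 := by
      nlinarith [mul_nonneg (sq_nonneg κ) (sq_nonneg (b - ‖P‖))]
    calc sC ≤ Real.sqrt ((κ^2*‖P‖-b)^2) := Real.sqrt_le_sqrt h1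
    _ = κ^2*‖P‖-b := Real.sqrt_sq (by nlinarith)
  -- gamma facts
  have hGam : ∀ x ∈ ovalGamma κ b P,
      b + sC ≤ κ^2*⟪x,P⟫ ∧ ⟪x,P⟫ ≤ ‖P‖ := by
    intro x hx
    obtain ⟨hx1, hx2⟩ := hx
    rw [hIN, div_le_iff₀ (by positivity)] at hx2
    constructor
    · nlinarith
    · have := real_inner_le_norm x P
      rwa [hx1, one_mul] at this
  have hH : ∀ x : EuclideanSpace ℝ (Fin n), ovalH' κ b P x =
      ((κ^2*⟪x,P⟫ - b) -
        Real.sqrt ((κ^2*⟪x,P⟫-b)^2 - (κ^2-1)*(κ^2*‖P‖^2-b^2)))/(κ^2-1) := by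
    intro x; rfl
  -- x₁ facts
  have hx1t : ⟪(‖P‖⁻¹ • P : EuclideanSpace ℝ (Fin n)), P⟫ = ‖P‖ := by
    rw [real_inner_smul_left, real_inner_self_eq_norm_sq, sq]
    field_simp
  have hx1n : ‖(‖P‖⁻¹ • P : EuclideanSpace ℝ (Fin n))‖ = 1 := by
    rw [norm_smul, norm_inv, norm_norm, inv_mul_cancel₀ hN.ne']
  have hx1mem : (‖P‖⁻¹ • P) ∈ ovalGamma κ b P := by
    refine ⟨hx1n, ?_⟩
    rw [hIN, hx1t, div_le_iff₀ (by positivity)]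
    nlinarith
  have hx1val : ovalH' κ b P (‖P‖⁻¹ • P) = (κ * ‖P‖ - b) / (κ - 1) := by
    rw [hH, hx1t]
    have h1 : (κ^2*‖P‖-b)^2 - (κ^2-1)*(κ^2*‖P‖^2-b^2) = (κ*(b-‖P‖))^2 := by ring
    rw [h1, Real.sqrt_sq (by nlinarith)]
    rw [div_eq_div_iff (by positivity) (by linarith)]
    ring
  -- the max value
  have hXpos : 0 < Real.sqrt (κ^2-1) := Real.sqrt_pos.2 hκ2
  have hMeq : sC/(κ^2-1) = Real.sqrt (κ^2*‖P‖^2-b^2) / Real.sqrt (κ^2-1) := by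
    rw [hsCdef, Real.sqrt_mul hκ2.le, div_eq_div_iff hκ2.ne' hXpos.ne']
    linear_combination Real.sqrt (κ^2*‖P‖^2-b^2) * Real.mul_self_sqrt hκ2.le
  -- existence of orthogonal unit vector
  have hKbot : ((ℝ ∙ P)ᗮ : Submodule ℝ (EuclideanSpace ℝ (Fin n))) ≠ ⊥ := by
    intro h
    have h1 : finrank ℝ (ℝ ∙ P) + finrank ℝ ((ℝ ∙ P)ᗮ : Submodule ℝ (EuclideanSpace ℝ (Fin n))) = n := by
      rw [Submodule.finrank_add_finrank_orthogonal, finrank_euclideanSpace_fin]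
    rw [h, finrank_bot, finrank_span_singleton hP] at h1
    omega
  obtain ⟨w, hwK, hw0⟩ := Submodule.exists_mem_ne_zero_of_ne_bot hKbot
  have hwP : ⟪P, w⟫ = 0 := hwK P (Submodule.mem_span_singleton_self P)
  have hwn : (0:ℝ) < ‖w‖ := norm_pos_iff.mpr hw0
  set v : EuclideanSpace ℝ (Fin n) := ‖w‖⁻¹ • w with hvdef
  have hvn : ‖v‖ = 1 := by
    rw [hvdef, norm_smul, norm_inv, norm_norm, inv_mul_cancel₀ hwn.ne']
  have hvP : ⟪v, P⟫ = 0 := by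
    rw [hvdef, real_inner_smul_left, real_inner_comm, hwP, mul_zero]
  -- the point x₂ achieving the max
  set t₀ : ℝ := (b + sC)/κ^2 with ht₀def
  have ht₀pos : 0 < t₀ := by positivity
  have ht₀le : t₀ ≤ ‖P‖ := by
    rw [ht₀def, div_le_iff₀ (by positivity)]
    nlinarith
  set s : ℝ := Real.sqrt (1 - t₀^2/‖P‖^2) with hsdef
  have hs2 : s^2 = 1 - t₀^2/‖P‖^2 := by
    rw [hsdef]
    apply Real.sq_sqrt
    rw [sub_nonneg, div_le_one (by positivity)]
    exact pow_le_pow_left₀ ht₀pos.le ht₀le 2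
  set x₂ : EuclideanSpace ℝ (Fin n) := (t₀/‖P‖^2) • P + s • v with hx₂def
  have hx2t : ⟪x₂, P⟫ = t₀ := by
    rw [hx₂def, inner_add_left, real_inner_smul_left, real_inner_smul_left,
      real_inner_self_eq_norm_sq, hvP, mul_zero, add_zero]
    field_simp
  have hPv : ⟪P, v⟫ = 0 := by rw [real_inner_comm]; exact hvP
  have hx2n : ‖x₂‖ = 1 := by
    have h1 : ‖x₂‖^2 = 1 := by
      rw [hx₂def, norm_add_sq_real, real_inner_smul_left, real_inner_smul_right,
        hPv, mul_zero, mul_zero, norm_smul, norm_smul,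
        mul_pow, mul_pow, hvn]
      rw [Real.norm_eq_abs, Real.norm_eq_abs, sq_abs, sq_abs, hs2]
      field_simp
      ring
    have h2 := norm_nonneg x₂
    have h3 : (‖x₂‖-1)*(‖x₂‖+1) = 0 := by linear_combination h1
    rcases mul_eq_zero.1 h3 with h | h
    · linarith
    · linarith
  have hx2mem : x₂ ∈ ovalGamma κ b P := ⟨hx2n, by rw [hIN, hx2t]⟩
  have hsq0 : κ^2*t₀ - b = sC := by
    rw [ht₀def]; field_simp; ring
  have hx2val : ovalH' κ b P x₂ =
      Real.sqrt (κ^2*‖P‖^2-b^2) / Real.sqrt (κ^2-1) := by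
    rw [hH, hx2t, hsq0, hsC, sub_self, Real.sqrt_zero, sub_zero, hMeq]
  refine ⟨⟨⟨‖P‖⁻¹ • P, hx1mem, hx1val⟩, ?_⟩, hx1val, ⟨⟨x₂, hx2mem, hx2val⟩, ?_⟩, ?_⟩
  · rintro r ⟨x, hx, rfl⟩
    obtain ⟨h1, h2⟩ := hGam x hx
    rw [hH]
    exact oval_aux_min κ b ‖P‖ ⟪x,P⟫ hκ hN hb1 hb2 h1 h2
  · rintro r ⟨x, hx, rfl⟩
    obtain ⟨h1, h2⟩ := hGam x hx
    rw [hH, ← hMeq]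
    exact oval_aux_max κ b ‖P‖ ⟪x,P⟫ hκ hN hb1 hb2 h1
  · calc Real.sqrt (κ^2*‖P‖^2-b^2) / Real.sqrt (κ^2-1)
        = Real.sqrt ((κ^2*‖P‖^2-b^2)/(κ^2-1)) := (Real.sqrt_div hCin.le _).symm
      _ ≤ Real.sqrt (2*‖P‖*((κ*‖P‖-b)/(κ-1))) := by
          apply Real.sqrt_le_sqrt
          have hrw : 2*‖P‖*((κ*‖P‖-b)/(κ-1)) = (2*‖P‖*(κ*‖P‖-b))/(κ-1) := by ring
          rw [hrw, div_le_div_iff₀ hκ2 (by linarith : (0:ℝ) < κ-1)]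
          nlinarith [mul_nonneg (mul_nonneg (sub_pos.2 hb2).le
            (show (0:ℝ) ≤ 2*‖P‖*(κ+1)-(κ*‖P‖+b) by nlinarith))
            (show (0:ℝ) ≤ κ-1 by linarith)]
      _ = Real.sqrt (2*‖P‖) * Real.sqrt ((κ*‖P‖-b)/(κ-1)) :=
          Real.sqrt_mul (by positivity) _
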